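/- Let m ≥ 3, n ≥ 3, 2 ≤ l ≤ n−1 and k ≥ 0. The number of proper colorings of the signed book graph (B(m,n), σ_l) with color set {−k,…,−1,0,1,…,k} equals γ_m(2k+1)^{n−l} times the number of proper colorings of B^{uv}(m,l) with color set {−k,…,−1,0,1,…,k}. -/

import Mathlib

/-- Vertices of the book graph `B(m,n)`: `Sum.inl false` is `u`, `Sum.inl true` is `v`,
and `Sum.inr (i, j)` is the vertex `u_{j+1}^{i+1}`. -/
abbrev BookVertex (m n : ℕ) := Bool ⊕ (Fin n × Fin (m - 2))

/-- Adjacency relation of the book graph `B(m,n)`. -/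
def bookAdj (m n : ℕ) : BookVertex m n → BookVertex m n → Prop
  | Sum.inl a, Sum.inl b => a ≠ b
  | Sum.inl false, Sum.inr (_, j) => j.val = 0
  | Sum.inl true, Sum.inr (_, j) => j.val = m - 3
  | Sum.inr (_, j), Sum.inl false => j.val = 0
  | Sum.inr (_, j), Sum.inl true => j.val = m - 3
  | Sum.inr (i, j), Sum.inr (i', j') => i = i' ∧ (j.val + 1 = j'.val ∨ j'.val + 1 = j.val)

/-- The signature `σ_l` of `B(m,n)`: exactly the edges `u u_1^1, …, u u_1^l` are negative. -/
def sigmaL (m n l : ℕ) : BookVertex m n → BookVertex m n → ℤ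
  | Sum.inl false, Sum.inr (i, j) => if j.val = 0 ∧ i.val < l then -1 else 1
  | Sum.inr (i, j), Sum.inl false => if j.val = 0 ∧ i.val < l then -1 else 1
  | _, _ => 1

/-- The signature of `B^{uv}(m,n)`: exactly the edge `uv` is negative. -/
def sigmaUV (m n : ℕ) : BookVertex m n → BookVertex m n → ℤ
  | Sum.inl _, Sum.inl _ => -1
  | _, _ => 1

/-- `γ_m(x) = ∑_{i=0}^{m-2} (-1)^i (x-1)^{m-2-i}`. -/
def gammaP (m : ℕ) (x : ℤ) : ℤ := ∑ i ∈ Finset.range (m - 1), (-1) ^ i * (x - 1) ^ (m - 2 - i)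

open Finset

namespace Book12


/-- The color set `{-k, …, k}`. -/
noncomputable def S (k : ℕ) : Finset ℤ := Finset.Icc (-(k : ℤ)) k

lemma mem_S {k : ℕ} {x : ℤ} : x ∈ S k ↔ |x| ≤ (k : ℤ) := by
  simp [S, abs_le]

lemma card_S (k : ℕ) : (S k).card = 2 * k + 1 := by
  simp only [S, Int.card_Icc]
  omega

lemma neg_mem_S {k : ℕ} {x : ℤ} : -x ∈ S k ↔ x ∈ S k := by
  simp only [mem_S, abs_neg]

/-- Proper colorings of a path with `t+1` vertices, where the first vertex must avoid `a`
and the last must avoid `b`. -/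
def okP (k t : ℕ) (a b : ℤ) (c : Fin (t + 1) → ℤ) : Prop :=
  (∀ j, |c j| ≤ (k : ℤ)) ∧ (∀ j : Fin t, c j.castSucc ≠ c j.succ) ∧
    c 0 ≠ a ∧ c (Fin.last t) ≠ b

instance okP_finite (k t : ℕ) (a b : ℤ) : Finite {c : Fin (t + 1) → ℤ // okP k t a b c} := by
  apply Finite.of_injective
    (fun c => (fun j => (⟨c.1 j, mem_S.mpr (c.2.1 j)⟩ : S k) : Fin (t + 1) → S k))
  intro c d h
  ext j
  exact congrArg Subtype.val (congrFun h j)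

/-- Number of such path colorings. -/
noncomputable def N (k t : ℕ) (a b : ℤ) : ℕ := Nat.card {c : Fin (t + 1) → ℤ // okP k t a b c}

lemma N_zero (k : ℕ) (a b : ℤ) : N k 0 a b = (((S k).erase b).erase a).card := by
  rw [N, ← Nat.card_eq_finsetCard]
  apply Nat.card_congr
  refine ⟨fun c => ⟨c.1 0, ?_⟩, fun x => ⟨fun _ => x.1, ?_⟩, ?_, ?_⟩
  · obtain ⟨hb, hadj, h0, hl⟩ := c.2
    rw [mem_erase, mem_erase]
    exact ⟨h0, hl, mem_S.mpr (hb 0)⟩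
  · obtain ⟨h0, hl, hS⟩ := by
      have := x.2; rw [mem_erase, mem_erase] at this; exact this
    exact ⟨fun _ => mem_S.mp hS, fun j => j.elim0, h0, hl⟩
  · intro c
    apply Subtype.ext
    funext j
    have hj : j = 0 := Fin.ext (by omega)
    rw [hj]
  · intro x
    rfl

lemma nat_card_sigma {ι : Type*} [Fintype ι] (f : ι → Type*) [∀ i, Finite (f i)] :
    Nat.card (Sigma f) = ∑ i, Nat.card (f i) := by
  letI := fun i => Fintype.ofFinite (f i)
  simp [Nat.card_eq_fintype_card, Fintype.card_sigma]

/-- Peeling off the first vertex of a path. -/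
def stepEquiv (k t : ℕ) (a b : ℤ) :
    {c : Fin (t + 2) → ℤ // okP k (t + 1) a b c} ≃
      Σ x : ((S k).erase a), {c : Fin (t + 1) → ℤ // okP k t (x : ℤ) b c} where
  toFun c :=
    ⟨⟨c.1 0, mem_erase.mpr ⟨c.2.2.2.1, mem_S.mpr (c.2.1 0)⟩⟩,
      ⟨fun j => c.1 j.succ,
        fun j => c.2.1 _,
        fun j => by have := c.2.2.1 j.succ; rwa [← Fin.succ_castSucc] at this,
        (c.2.2.1 0).symm,
        by have := c.2.2.2.2; rwa [← Fin.succ_last] at this⟩⟩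
  invFun p :=
    ⟨Fin.cons (p.1 : ℤ) p.2.1, by
      obtain ⟨hxa, hxS⟩ := mem_erase.mp p.1.2
      obtain ⟨hb, hadj, h0, hl⟩ := p.2.2
      refine ⟨?_, ?_, ?_, ?_⟩
      · intro j
        refine Fin.cases ?_ ?_ j
        · simpa using mem_S.mp hxS
        · intro j'; simpa using hb j'
      · intro j
        refine Fin.cases ?_ ?_ j
        · simpa using h0.symm
        · intro j'
          rw [← Fin.succ_castSucc]
          simpa using hadj j'
      · simpa using hxa
      · rw [← Fin.succ_last]
        simpa using hl⟩
  left_inv c := Subtype.ext (Fin.cons_self_tail c.1)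
  right_inv p := by
    obtain ⟨⟨x, hx⟩, c, hc⟩ := p
    have h0 : (Fin.cons x c : Fin (t + 2) → ℤ) 0 = x := by simp
    refine Sigma.ext (Subtype.ext (by simpa using h0)) ?_
    rw [Subtype.heq_iff_coe_eq]
    · show (fun j => (Fin.cons x c : Fin (t + 2) → ℤ) j.succ) = c
      exact funext fun j => Fin.cons_succ (α := fun _ => ℤ) x c j
    · intro d
      simp [h0]

lemma N_succ (k t : ℕ) (a b : ℤ) :
    N k (t + 1) a b = ∑ x ∈ (S k).erase a, N k t x b := by
  rw [N, Nat.card_congr (stepEquiv k t a b),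
    nat_card_sigma (fun x : ((S k).erase a) => {c : Fin (t + 1) → ℤ // okP k t (x : ℤ) b c})]
  exact Finset.sum_coe_sort ((S k).erase a) (fun x => N k t x b)



lemma gamma3 (x : ℤ) : gammaP 3 x = x - 2 := by
  simp [gammaP, Finset.sum_range_succ]
  ring

lemma gamma_succ (s : ℕ) (x : ℤ) :
    gammaP (s + 4) x = (x - 1) * gammaP (s + 3) x + (-1 : ℤ) ^ (s + 2) := by
  unfold gammaP
  rw [show s + 4 - 1 = (s + 2) + 1 from rfl, Finset.sum_range_succ, Finset.mul_sum]
  congr 1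
  · apply Finset.sum_congr (by norm_num)
    intro i hi
    rw [Finset.mem_range] at hi
    have h1 : s + 4 - 2 - i = (s + 3 - 2 - i) + 1 := by omega
    rw [h1, pow_succ]
    ring
  · have : s + 4 - 2 - (s + 2) = 0 := by omega
    rw [this, pow_zero, mul_one]





lemma N_val (k : ℕ) : ∀ (t : ℕ) (a b : ℤ), |a| ≤ (k : ℤ) → |b| ≤ (k : ℤ) →
    (N k t a b : ℤ) = gammaP (t + 3) (2 * (k : ℤ) + 1) + (if a = b then (-1 : ℤ) ^ t else 0) := by
  intro t
  induction t with
  | zero =>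
    intro a b ha hb
    have haS : a ∈ S k := mem_S.mpr ha
    have hbS : b ∈ S k := mem_S.mpr hb
    rw [N_zero, gamma3]
    by_cases hab : a = b
    · subst hab
      rw [Finset.erase_idem, Finset.card_erase_of_mem haS, card_S]
      simp
      push_cast
      ring
    · have hk : 1 ≤ k := by
        by_contra h
        push_neg at h
        interval_cases k
        simp only [Nat.cast_zero, abs_nonpos_iff] at ha hb
        exact hab (ha.trans hb.symm)
      rw [Finset.card_erase_of_mem (Finset.mem_erase.mpr ⟨hab, haS⟩),
        Finset.card_erase_of_mem hbS, card_S]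
      simp only [hab, if_false, add_zero]
      have : 2 * k + 1 - 1 - 1 = 2 * k - 1 := by omega
      rw [this]
      push_cast [Nat.cast_sub (by omega : 1 ≤ 2 * k)]
      ring
  | succ t ih =>
    intro a b ha hb
    have haS : a ∈ S k := mem_S.mpr ha
    have hbS : b ∈ S k := mem_S.mpr hb
    rw [N_succ]
    push_cast
    rw [Finset.sum_congr rfl (fun x hx => ih x b
      (mem_S.mp (Finset.mem_of_mem_erase hx)) hb)]
    rw [Finset.sum_add_distrib, Finset.sum_const, Finset.card_erase_of_mem haS, card_S,
      Finset.sum_ite_eq' ((S k).erase a) b (fun _ => (-1 : ℤ) ^ t)]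
    rw [show t + 1 + 3 = t + 4 from rfl, gamma_succ]
    have hmem : b ∈ (S k).erase a ↔ ¬ (a = b) := by
      rw [Finset.mem_erase]
      constructor
      · intro h h2; exact h.1 h2.symm
      · intro h; exact ⟨fun h2 => h h2.symm, hbS⟩
    by_cases hab : a = b
    · rw [if_neg (hmem.not_left.mpr (by simpa using hab)), if_pos hab]
      simp only [nsmul_eq_mul]
      push_cast
      ring_nf
    · rw [if_pos (hmem.mpr hab), if_neg hab]
      simp only [nsmul_eq_mul]
      push_cast
      ring_nf




lemma sign_flip {s x y : ℤ} (hs : s * s = 1) : x ≠ s * y ↔ y ≠ s * x := by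
  have key : ∀ u v : ℤ, u = s * v → v = s * u := by
    intro u v h
    rw [h, ← mul_assoc, hs, one_mul]
  exact ⟨fun h h2 => h (key y x h2), fun h h2 => h (key x y h2)⟩

noncomputable def F (k : ℕ) (δ : ℤ) : Finset (ℤ × ℤ) := (S k ×ˢ S k).filter fun p => p.1 ≠ δ * p.2

lemma count_book (k t n : ℕ) (σ : BookVertex (t + 3) n → BookVertex (t + 3) n → ℤ)
    (ε : Fin n → ℤ) (δ : ℤ) (hδ : δ * δ = 1) (hε : ∀ i, ε i * ε i = 1)
    (hσ1 : ∀ a b, σ (Sum.inl a) (Sum.inl b) = δ)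
    (hσ2 : ∀ (i : Fin n) (j : Fin (t + 1)),
      σ (Sum.inl false) (Sum.inr (i, j)) = if j.val = 0 then ε i else 1)
    (hσ2' : ∀ (i : Fin n) (j : Fin (t + 1)),
      σ (Sum.inr (i, j)) (Sum.inl false) = if j.val = 0 then ε i else 1)
    (hσ3 : ∀ (i : Fin n) (j : Fin (t + 1)), σ (Sum.inl true) (Sum.inr (i, j)) = 1)
    (hσ3' : ∀ (i : Fin n) (j : Fin (t + 1)), σ (Sum.inr (i, j)) (Sum.inl true) = 1)
    (hσ4 : ∀ (i : Fin n) (j : Fin (t + 1)) (i' : Fin n) (j' : Fin (t + 1)),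
      σ (Sum.inr (i, j)) (Sum.inr (i', j')) = 1) :
    Nat.card {c : BookVertex (t + 3) n → ℤ //
        (∀ x, |c x| ≤ (k : ℤ)) ∧ ∀ x y, bookAdj (t + 3) n x y → c x ≠ σ x y * c y}
      = ∑ p ∈ F k δ, ∏ i : Fin n, N k t (ε i * p.1) p.2 := by
  classical
  have adj_uv : bookAdj (t + 3) n (Sum.inl false) (Sum.inl true) := by
    simp [bookAdj]
  have adj_u : ∀ (i : Fin n), bookAdj (t + 3) n (Sum.inr (i, (0 : Fin (t + 1)))) (Sum.inl false) := by
    intro i; simp [bookAdj]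
  have adj_v : ∀ (i : Fin n), bookAdj (t + 3) n (Sum.inr (i, Fin.last t)) (Sum.inl true) := by
    intro i; simp [bookAdj]
  have adj_in : ∀ (i : Fin n) (j : Fin t),
      bookAdj (t + 3) n (Sum.inr (i, j.castSucc)) (Sum.inr (i, j.succ)) := by
    intro i j; exact ⟨rfl, Or.inl rfl⟩
  have e : {c : BookVertex (t + 3) n → ℤ //
        (∀ x, |c x| ≤ (k : ℤ)) ∧ ∀ x y, bookAdj (t + 3) n x y → c x ≠ σ x y * c y} ≃
      Σ p : (F k δ), Π i : Fin n,
        {d : Fin (t + 1) → ℤ // okP k t (ε i * (p : ℤ × ℤ).1) (p : ℤ × ℤ).2 d} := by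
    refine ⟨fun c => ⟨⟨(c.1 (Sum.inl false), c.1 (Sum.inl true)), ?_⟩,
        fun i => ⟨fun j => c.1 (Sum.inr (i, j)), ?_, ?_, ?_, ?_⟩⟩,
      fun q => ⟨Sum.elim (fun bb => bif bb then (q.1 : ℤ × ℤ).2 else (q.1 : ℤ × ℤ).1)
        (fun z => (q.2 z.1).1 z.2), ?_, ?_⟩, ?_, ?_⟩
    · -- membership in F k δ
      refine Finset.mem_filter.mpr ⟨Finset.mem_product.mpr ⟨mem_S.mpr (c.2.1 _), mem_S.mpr (c.2.1 _)⟩, ?_⟩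
      have := c.2.2 _ _ adj_uv
      rwa [hσ1] at this
    · exact fun j => c.2.1 _
    · -- internal adjacency
      intro j
      have := c.2.2 _ _ (adj_in i j)
      rwa [hσ4, one_mul] at this
    · -- first vertex
      have := c.2.2 _ _ (adj_u i)
      rwa [hσ2', if_pos (by simp)] at this
    · -- last vertex
      have := c.2.2 _ _ (adj_v i)
      rwa [hσ3', one_mul] at this
    · -- bounds for invFun
      rintro (bb | ⟨i, j⟩)
      · have hm := Finset.mem_product.mp (Finset.mem_filter.mp q.1.2).1
        cases bb
        · simpa using mem_S.mp hm.1
        · simpa using mem_S.mp hm.2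
      · exact (q.2 i).2.1 j
    · -- properness for invFun
      have hq := Finset.mem_filter.mp q.1.2
      rintro (a | ⟨i, j⟩) (b | ⟨i', j'⟩) hxy
      · -- inl inl
        rw [hσ1]
        cases a <;> cases b
        · exact absurd rfl hxy
        · exact hq.2
        · exact (sign_flip hδ).mp hq.2
        · exact absurd rfl hxy
      · -- inl, inr
        cases a
        · have hj : j' = (0 : Fin (t + 1)) := Fin.ext (by simpa [bookAdj] using hxy)
          rw [hj, hσ2, if_pos (by simp)]
          exact (sign_flip (hε i')).mp ((q.2 i').2.2.2.1)
        · have hj : j' = Fin.last t := Fin.ext (by simpa [bookAdj] using hxy)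
          rw [hj, hσ3, one_mul]
          exact ((q.2 i').2.2.2.2).symm
      · -- inr, inl
        cases b
        · have hj : j = (0 : Fin (t + 1)) := Fin.ext (by simpa [bookAdj] using hxy)
          rw [hj, hσ2', if_pos (by simp)]
          exact (q.2 i).2.2.2.1
        · have hj : j = Fin.last t := Fin.ext (by simpa [bookAdj] using hxy)
          rw [hj, hσ3', one_mul]
          exact (q.2 i).2.2.2.2
      · -- inr, inr
        obtain ⟨hii, hjj⟩ := hxy
        subst hii
        rw [hσ4, one_mul]
        rcases hjj with h | h
        · have hjt : j.val < t := by
            have := j'.2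
            omega
          have key := (q.2 i).2.2.1 (⟨j.val, hjt⟩ : Fin t)
          rw [show (⟨j.val, hjt⟩ : Fin t).castSucc = j from Fin.ext rfl,
            show (⟨j.val, hjt⟩ : Fin t).succ = j' from Fin.ext (by simpa using h)] at key
          exact key
        · have hjt : j'.val < t := by
            have := j.2
            omega
          have key := ((q.2 i).2.2.1 (⟨j'.val, hjt⟩ : Fin t)).symm
          rw [show (⟨j'.val, hjt⟩ : Fin t).succ = j from Fin.ext (by simpa using h),
            show (⟨j'.val, hjt⟩ : Fin t).castSucc = j' from Fin.ext rfl] at key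
          exact key
    · -- left inverse
      intro c
      apply Subtype.ext
      funext x
      rcases x with (bb | ⟨i, j⟩)
      · cases bb <;> rfl
      · rfl
    · -- right inverse
      intro q
      rfl
  rw [Nat.card_congr e,
    nat_card_sigma (fun p : (F k δ) => Π i : Fin n,
      {d : Fin (t + 1) → ℤ // okP k t (ε i * (p : ℤ × ℤ).1) (p : ℤ × ℤ).2 d})]
  rw [show (fun p : (F k δ) => Nat.card (Π i : Fin n,
      {d : Fin (t + 1) → ℤ // okP k t (ε i * (p : ℤ × ℤ).1) (p : ℤ × ℤ).2 d}))
    = fun p : (F k δ) => ∏ i : Fin n, N k t (ε i * (p : ℤ × ℤ).1) (p : ℤ × ℤ).2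
    from funext fun p => Nat.card_pi]
  exact Finset.sum_coe_sort (F k δ) (fun p => ∏ i : Fin n, N k t (ε i * p.1) p.2)


lemma prod_ite_pages (n l : ℕ) (h : l ≤ n) (X Y : ℤ) :
    (∏ i : Fin n, if (i : ℕ) < l then X else Y) = X ^ l * Y ^ (n - l) := by
  rw [Fin.prod_univ_eq_prod_range (fun i => if i < l then X else Y) n]
  rw [Finset.range_eq_Ico, ← Finset.prod_Ico_consecutive _ (Nat.zero_le l) h]
  congr 1
  · rw [Finset.prod_congr rfl (fun i hi => if_pos (Finset.mem_Ico.mp hi).2),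
      Finset.prod_const, Nat.card_Ico, Nat.sub_zero]
  · rw [Finset.prod_congr rfl
      (fun i hi => if_neg (Nat.not_lt.mpr (Finset.mem_Ico.mp hi).1)),
      Finset.prod_const, Nat.card_Ico]

end Book12

theorem statement12 (m n l : ℕ) (hm : 3 ≤ m) (hn : 3 ≤ n) (hl : 2 ≤ l) (hln : l ≤ n - 1)
    (k : ℕ) :
    (Nat.card {c : BookVertex m n → ℤ //
        (∀ x, |c x| ≤ (k : ℤ)) ∧
        ∀ x y, bookAdj m n x y → c x ≠ sigmaL m n l x y * c y} : ℤ) =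
      gammaP m (2 * (k : ℤ) + 1) ^ (n - l) *
        (Nat.card {c : BookVertex m l → ℤ //
          (∀ x, |c x| ≤ (k : ℤ)) ∧
          ∀ x y, bookAdj m l x y → c x ≠ sigmaUV m l x y * c y} : ℤ) := by
  classical
  open Book12 in
  obtain ⟨t, rfl⟩ : ∃ t, m = t + 3 := ⟨m - 3, by omega⟩
  have hln' : l ≤ n := by omega
  -- left-hand side
  have hL := count_book k t n (sigmaL (t + 3) n l)
    (fun i => if (i : ℕ) < l then -1 else 1) 1
    (by norm_num) (fun i => by by_cases h : (i : ℕ) < l <;> simp [h])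
    (fun a b => by cases a <;> cases b <;> rfl)
    (fun i j => by
      simp only [sigmaL]
      by_cases h1 : (j : ℕ) = 0 <;> by_cases h2 : (i : ℕ) < l <;> simp [h1, h2])
    (fun i j => by
      simp only [sigmaL]
      by_cases h1 : (j : ℕ) = 0 <;> by_cases h2 : (i : ℕ) < l <;> simp [h1, h2])
    (fun i j => rfl) (fun i j => rfl) (fun i j i' j' => rfl)
  have hR := count_book k t l (sigmaUV (t + 3) l)
    (fun _ => 1) (-1)
    (by norm_num) (fun i => by norm_num)
    (fun a b => rfl)
    (fun i j => by simp [sigmaUV])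
    (fun i j => by simp [sigmaUV])
    (fun i j => rfl) (fun i j => rfl) (fun i j i' j' => rfl)
  rw [hL, hR]
  push_cast
  have hgamma : ∀ p : ℤ × ℤ, p ∈ F k 1 →
      (N k t p.1 p.2 : ℤ) = gammaP (t + 3) (2 * (k : ℤ) + 1) := by
    intro p hp
    obtain ⟨hmem, hne⟩ := Finset.mem_filter.mp hp
    obtain ⟨h1, h2⟩ := Finset.mem_product.mp hmem
    rw [N_val k t p.1 p.2 (mem_S.mp h1) (mem_S.mp h2),
      if_neg (by rwa [one_mul] at hne), add_zero]
  calc (∑ p ∈ F k 1, ∏ i : Fin n,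
        (N k t ((if (i : ℕ) < l then -1 else 1) * p.1) p.2 : ℤ))
      = ∑ p ∈ F k 1, (N k t (-p.1) p.2 : ℤ) ^ l *
          gammaP (t + 3) (2 * (k : ℤ) + 1) ^ (n - l) := by
        apply Finset.sum_congr rfl
        intro p hp
        rw [show (∏ i : Fin n, (N k t ((if (i : ℕ) < l then -1 else 1) * p.1) p.2 : ℤ))
            = ∏ i : Fin n, (if (i : ℕ) < l then (N k t (-p.1) p.2 : ℤ)
                else (N k t p.1 p.2 : ℤ)) from
          Finset.prod_congr rfl fun i _ => by split_ifs <;> norm_num]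
        rw [prod_ite_pages n l hln', hgamma p hp]
    _ = gammaP (t + 3) (2 * (k : ℤ) + 1) ^ (n - l) *
          ∑ p ∈ F k (-1), (N k t p.1 p.2 : ℤ) ^ l := by
        rw [Finset.mul_sum]
        apply Finset.sum_nbij' (fun p : ℤ × ℤ => (-p.1, p.2))
          (fun p : ℤ × ℤ => (-p.1, p.2))
        · intro p hp
          obtain ⟨hmem, hne⟩ := Finset.mem_filter.mp hp
          obtain ⟨h1, h2⟩ := Finset.mem_product.mp hmem
          refine Finset.mem_filter.mpr ⟨Finset.mem_product.mpr ⟨neg_mem_S.mpr h1, h2⟩, ?_⟩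
          rw [one_mul] at hne
          intro hcon
          simp only at hcon
          exact hne (by linarith)
        · intro p hp
          obtain ⟨hmem, hne⟩ := Finset.mem_filter.mp hp
          obtain ⟨h1, h2⟩ := Finset.mem_product.mp hmem
          refine Finset.mem_filter.mpr ⟨Finset.mem_product.mpr ⟨neg_mem_S.mpr h1, h2⟩, ?_⟩
          intro hcon
          simp only at hcon
          exact hne (by linarith)
        · intro p _; simp
        · intro p _; simp
        · intro p hp
          simp only [neg_neg]
          ring
    _ = _ := by
        congr 1
        apply Finset.sum_congr rfl
        intro p hp
        simp [Finset.prod_const]
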